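/- Every monotonically ω-stable space has a full q-skeleton. -/

import Mathlib

open Filter Topology Set

universe u v

/-- `[X]^{≤ω}`: the countable subsets of `X`, ordered by inclusion. -/
abbrev CtbSet (X : Type*) := {A : Set X // A.Countable}

/-- A map between families of countable sets is `ω`-monotone if it is monotone with respect to
inclusion and preserves unions of increasing `ω`-chains. -/
def OmegaMonotone {X Y : Type*} (φ : CtbSet X → CtbSet Y) : Prop :=
  (∀ A B : CtbSet X, A.1 ⊆ B.1 → (φ A).1 ⊆ (φ B).1) ∧
  ∀ (A : ℕ → CtbSet X) (B : CtbSet X), (∀ n, (A n).1 ⊆ (A (n + 1)).1) →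
    B.1 = ⋃ n, (A n).1 → (φ B).1 = ⋃ n, (φ (A n)).1

/-- An assignment of sets indexed by a poset `Γ` is `ω`-monotone if it is order preserving and
sends suprema of increasing `ω`-chains to the union of the images. -/
def OmegaMonotoneIdx {Γ Y : Type*} [Preorder Γ] (D : Γ → Set Y) : Prop :=
  (∀ s t : Γ, s ≤ t → D s ⊆ D t) ∧
  ∀ (s : ℕ → Γ) (t : Γ), Monotone s → IsLUB (Set.range s) t → D t = ⋃ n, D (s n)

/-- `N` is a network of the map `f`. -/
def IsNetworkOfMap {X Y : Type*} [TopologicalSpace Y] (N : Set (Set X)) (f : X → Y) : Prop :=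
  ∀ x : X, ∀ U : Set Y, IsOpen U → f x ∈ U → ∃ M ∈ N, x ∈ M ∧ f '' M ⊆ U

/-- `q : X → Y` is an `ℝ`-quotient map. -/
def RQuotient {X Y : Type*} [TopologicalSpace X] [TopologicalSpace Y] (q : X → Y) : Prop :=
  Continuous q ∧ Function.Surjective q ∧ ∀ g : Y → ℝ, Continuous (g ∘ q) → Continuous g

/-- The family `r` of retractions indexed by `Γ` is an `r`-skeleton on `X`. -/
structure IsRSkeleton {X : Type*} [TopologicalSpace X] {Γ : Type*} [PartialOrder Γ]
    (r : Γ → X → X) : Prop where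
  directed : ∀ s t : Γ, ∃ u, s ≤ u ∧ t ≤ u
  sigma : ∀ s : ℕ → Γ, Monotone s → ∃ t, IsLUB (Set.range s) t
  cont : ∀ s, Continuous (r s)
  retract : ∀ s x, r s (r s x) = r s x
  cosmic : ∀ s, ∃ N : Set (Set X), N.Countable ∧ (∀ M ∈ N, M ⊆ Set.range (r s)) ∧
    ∀ x ∈ Set.range (r s), ∀ U : Set X, IsOpen U → x ∈ U → ∃ M ∈ N, x ∈ M ∧ M ⊆ U
  comm₁ : ∀ s t : Γ, s ≤ t → ∀ x, r s (r t x) = r s x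
  comm₂ : ∀ s t : Γ, s ≤ t → ∀ x, r t (r s x) = r s x
  chain : ∀ (s : ℕ → Γ) (t : Γ), Monotone s → IsLUB (Set.range s) t →
    ∀ x, Tendsto (fun n => r (s n) x) atTop (𝓝 (r t x))
  toId : ∀ x : X, Tendsto (fun s : Γ => r s x) atTop (𝓝 x)

def IsFullRSkeleton {X : Type*} [TopologicalSpace X] {Γ : Type*} [PartialOrder Γ]
    (r : Γ → X → X) : Prop :=
  IsRSkeleton r ∧ ∀ x : X, ∃ s : Γ, x ∈ Set.range (r s)

def HasFullRSkeleton (X : Type u) [TopologicalSpace X] : Prop :=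
  ∃ (Γ : Type u) (inst : PartialOrder Γ) (r : Γ → X → X), @IsFullRSkeleton X _ Γ inst r

/-- A strong `r`-skeleton: an `r`-skeleton such that for every index `s`, every `n` and every
closed subset `F` of `X^n` there is `t ≥ s` whose `n`-th power maps `F` into itself. -/
def IsStrongRSkeleton {X : Type*} [TopologicalSpace X] {Γ : Type*} [PartialOrder Γ]
    (r : Γ → X → X) : Prop :=
  IsRSkeleton r ∧ ∀ (s : Γ) (n : ℕ) (F : Set (Fin n → X)), IsClosed F →
    ∃ t : Γ, s ≤ t ∧ (fun (v : Fin n → X) (i : Fin n) => r t (v i)) '' F ⊆ F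

def HasStrongRSkeleton (X : Type u) [TopologicalSpace X] : Prop :=
  ∃ (Γ : Type u) (inst : PartialOrder Γ) (r : Γ → X → X), @IsStrongRSkeleton X _ Γ inst r

/-- A `q`-skeleton on `X` indexed by the up-directed σ-complete poset `Γ`. -/
structure QSkeleton (X : Type u) [TopologicalSpace X] (Γ : Type v) [PartialOrder Γ] where
  Xs : Γ → Type u
  top : ∀ s, TopologicalSpace (Xs s)
  q : ∀ s, X → Xs s
  D : Γ → Set X
  directed : ∀ s t : Γ, ∃ u, s ≤ u ∧ t ≤ u
  sigma : ∀ s : ℕ → Γ, Monotone s → ∃ t, IsLUB (Set.range s) t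
  rquot : ∀ s, @RQuotient X (Xs s) _ (top s) (q s)
  D_ctble : ∀ s, (D s).Countable
  dense : ∀ s, @Dense (Xs s) (top s) (q s '' D s)
  proj : ∀ s t : Γ, s ≤ t → ∃ p : Xs t → Xs s, @Continuous _ _ (top t) (top s) p ∧
    Function.Surjective p ∧ ∀ x, q s x = p (q t x)
  Dmono : OmegaMonotoneIdx D

/-- The `q`-skeleton is full: `C_p(X) = ⋃_s q_s^*(C_p(X_s))`. -/
def QSkeleton.Full {X : Type u} [TopologicalSpace X] {Γ : Type v} [PartialOrder Γ]
    (S : QSkeleton X Γ) : Prop :=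
  ∀ f : X → ℝ, Continuous f →
    ∃ (s : Γ) (g : S.Xs s → ℝ), @Continuous _ _ (S.top s) _ g ∧ f = g ∘ S.q s

def HasFullQSkeleton (X : Type u) [TopologicalSpace X] : Prop :=
  ∃ (Γ : Type u) (inst : PartialOrder Γ) (S : @QSkeleton X _ Γ inst), S.Full

/-- `C_p(X)`: continuous real-valued functions with the topology of pointwise convergence. -/
abbrev Cp (X : Type u) [TopologicalSpace X] : Type u := {f : X → ℝ // Continuous f}

/-- The diagonal map `Δ_A : X → ℝ^A` of a set `A ⊆ C_p(X)`. -/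
def cpDiag {X : Type u} [TopologicalSpace X] (A : Set (Cp X)) (x : X) : ↥A → ℝ :=
  fun f => f.1.1 x

/-- The topology of the Alexandroff duplicate on `X × Bool`. -/
def ADTopology (X : Type*) [TopologicalSpace X] : TopologicalSpace (X × Bool) where
  IsOpen V := ∀ p ∈ V, p.2 = false →
    ∃ U : Set X, IsOpen U ∧ p.1 ∈ U ∧ {q : X × Bool | q.1 ∈ U ∧ q ≠ (p.1, true)} ⊆ V
  isOpen_univ := fun p _ _ => ⟨Set.univ, isOpen_univ, trivial, fun _ _ => trivial⟩
  isOpen_inter := fun A B hA hB p hp hb => by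
    obtain ⟨U, hU, hxU, hUA⟩ := hA p hp.1 hb
    obtain ⟨W, hW, hxW, hWB⟩ := hB p hp.2 hb
    exact ⟨U ∩ W, hU.inter hW, ⟨hxU, hxW⟩,
      fun q hq => ⟨hUA ⟨hq.1.1, hq.2⟩, hWB ⟨hq.1.2, hq.2⟩⟩⟩
  isOpen_sUnion := fun S hS p hp hb => by
    obtain ⟨V, hV, hpV⟩ := hp
    obtain ⟨U, hU, hxU, hUV⟩ := hS V hV p hpV hb
    exact ⟨U, hU, hxU, fun q hq => ⟨V, hV, hUV hq⟩⟩

/-- The Alexandroff duplicate of `X`. -/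
def AD (X : Type u) [TopologicalSpace X] : Type u := X × Bool

instance (X : Type u) [TopologicalSpace X] : TopologicalSpace (AD X) := ADTopology X

/-- A compact Hausdorff space is Corson compact if it embeds into a Σ-product of real lines. -/
def IsCorsonCompact (X : Type u) [TopologicalSpace X] : Prop :=
  CompactSpace X ∧ T2Space X ∧ ∃ (κ : Type u) (e : X → κ → ℝ),
    IsEmbedding e ∧ ∀ x, {i | e x i ≠ 0}.Countable

/-- The assignments `r`, `N` witness that `X` is monotonically retractable. -/
structure MonRetractableWitness (X : Type u) [TopologicalSpace X]
    (r : CtbSet X → X → X) (N : CtbSet X → CtbSet (Set X)) : Prop where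
  cont : ∀ A, Continuous (r A)
  retract : ∀ A x, r A (r A x) = r A x
  sub : ∀ A : CtbSet X, A.1 ⊆ Set.range (r A)
  network : ∀ A, IsNetworkOfMap (N A).1 (r A)
  mono : OmegaMonotone N

def MonotonicallyRetractable (X : Type u) [TopologicalSpace X] : Prop :=
  ∃ (r : CtbSet X → X → X) (N : CtbSet X → CtbSet (Set X)), MonRetractableWitness X r N

/-- `X` is monotonically `ω`-stable. -/
def MonotonicallyOmegaStable (X : Type u) [TopologicalSpace X] : Prop :=
  ∃ N : CtbSet (Cp X) → CtbSet (Set X), OmegaMonotone N ∧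
    ∀ A : CtbSet (Cp X), IsNetworkOfMap (N A).1 (cpDiag (closure A.1))

/-- A subset `K` is countably compact: every countable open cover of `K` has a finite subcover. -/
def IsCountablyCompactSet {X : Type*} [TopologicalSpace X] (K : Set X) : Prop :=
  ∀ U : ℕ → Set X, (∀ n, IsOpen (U n)) → K ⊆ ⋃ n, U n → ∃ t : Finset ℕ, K ⊆ ⋃ n ∈ t, U n

/-- The closure of `A` under `φ`. -/
def phiBar {X : Type*} (φ : CtbSet X → CtbSet X) (A : CtbSet X) : Set X :=
  ⋂₀ {B : Set X | ∃ hB : B.Countable, A.1 ⊆ B ∧ (φ ⟨B, hB⟩).1 ⊆ B}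

/-- The iterates `φ_n` of `φ`: `φ_0(A) = A`, `φ_{n+1}(A) = φ_n(A) ∪ φ(φ_n(A))`. -/
def phiIter {X : Type*} (φ : CtbSet X → CtbSet X) : ℕ → CtbSet X → CtbSet X
  | 0, A => A
  | n + 1, A => ⟨(phiIter φ n A).1 ∪ (φ (phiIter φ n A)).1,
      (phiIter φ n A).2.union (φ (phiIter φ n A)).2⟩

namespace QSkelAux

variable {X : Type u} [TopologicalSpace X]

/-- Affine layer: `q₁ + q₂ * f` for `f ∈ s`, plus rational constants. -/
def Lset (s : Set (Cp X)) : Set (Cp X) :=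
  {l | (∃ q₁ q₂ : ℚ, ∃ f ∈ s, l.1 = fun x => (q₁ : ℝ) + (q₂ : ℝ) * f.1 x) ∨
       (∃ q : ℚ, l.1 = fun _ => (q : ℝ))}

/-- Iterated closure under pointwise max and min. -/
def Cn : ℕ → Set (Cp X) → Set (Cp X)
  | 0, s => Lset s
  | n+1, s => Cn n s ∪ {l | ∃ a ∈ Cn n s, ∃ b ∈ Cn n s,
      (l.1 = fun x => max (a.1 x) (b.1 x)) ∨ (l.1 = fun x => min (a.1 x) (b.1 x))}

def algSet (s : Set (Cp X)) : Set (Cp X) := ⋃ n, Cn n s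

lemma Lset_mono {s t : Set (Cp X)} (h : s ⊆ t) : Lset s ⊆ Lset t := by
  rintro l (⟨q₁, q₂, f, hf, hl⟩ | hc)
  · exact Or.inl ⟨q₁, q₂, f, h hf, hl⟩
  · exact Or.inr hc

lemma Cn_mono (n : ℕ) {s t : Set (Cp X)} (h : s ⊆ t) : Cn n s ⊆ Cn n t := by
  induction n with
  | zero => exact Lset_mono h
  | succ n ih =>
    rintro l (hl | ⟨a, ha, b, hb, hl⟩)
    · exact Or.inl (ih hl)
    · exact Or.inr ⟨a, ih ha, b, ih hb, hl⟩

lemma algSet_mono {s t : Set (Cp X)} (h : s ⊆ t) : algSet s ⊆ algSet t := by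
  apply Set.iUnion_mono
  exact fun n => Cn_mono n h

lemma Lset_subset_algSet {s : Set (Cp X)} : Lset s ⊆ algSet s :=
  Set.subset_iUnion (fun n => Cn n s) 0

lemma const_mem_Lset (s : Set (Cp X)) (q : ℚ) (l : Cp X) (hl : l.1 = fun _ => (q : ℝ)) :
    l ∈ Lset s := Or.inr ⟨q, hl⟩

lemma Cn_le_Cn {s : Set (Cp X)} {m n : ℕ} (h : m ≤ n) : Cn m s ⊆ Cn n s := by
  induction h with
  | refl => exact subset_rfl
  | step h ih => exact ih.trans Set.subset_union_left

lemma max_mem_algSet {s : Set (Cp X)} {a b : Cp X} (ha : a ∈ algSet s) (hb : b ∈ algSet s)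
    (l : Cp X) (hl : (l.1 = fun x => max (a.1 x) (b.1 x)) ∨ (l.1 = fun x => min (a.1 x) (b.1 x))) :
    l ∈ algSet s := by
  obtain ⟨m, hm⟩ := Set.mem_iUnion.mp ha
  obtain ⟨k, hk⟩ := Set.mem_iUnion.mp hb
  apply Set.mem_iUnion.mpr ⟨max m k + 1, ?_⟩
  exact Or.inr ⟨a, Cn_le_Cn (le_max_left m k) hm, b, Cn_le_Cn (le_max_right m k) hk, hl⟩

lemma val_fiber_subsingleton (g : X → ℝ) : ({l : Cp X | l.1 = g}).Subsingleton :=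
  fun a ha b hb => Subtype.ext (ha.trans hb.symm)

lemma Lset_countable {s : Set (Cp X)} (hs : s.Countable) : (Lset s).Countable := by
  have h1 : Lset s ⊆ (⋃ (q₁ : ℚ), ⋃ (q₂ : ℚ), ⋃ f ∈ s,
      {l : Cp X | l.1 = fun x => (q₁ : ℝ) + (q₂ : ℝ) * f.1 x})
      ∪ ⋃ (q : ℚ), {l : Cp X | l.1 = fun _ => (q : ℝ)} := by
    rintro l (⟨q₁, q₂, f, hf, hl⟩ | ⟨q, hl⟩)
    · refine Or.inl ?_
      simp only [Set.mem_iUnion]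
      exact ⟨q₁, q₂, f, hf, hl⟩
    · refine Or.inr ?_
      simp only [Set.mem_iUnion]
      exact ⟨q, hl⟩
  apply Set.Countable.mono h1
  apply Set.Countable.union
  · apply Set.countable_iUnion; intro q₁
    apply Set.countable_iUnion; intro q₂
    exact hs.biUnion fun f _ => (val_fiber_subsingleton _).countable
  · exact Set.countable_iUnion fun q => (val_fiber_subsingleton _).countable

lemma Cn_countable {s : Set (Cp X)} (hs : s.Countable) (n : ℕ) : (Cn n s).Countable := by
  induction n with
  | zero => exact Lset_countable hs
  | succ n ih =>
    apply Set.Countable.union ih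
    have h1 : {l : Cp X | ∃ a ∈ Cn n s, ∃ b ∈ Cn n s,
        (l.1 = fun x => max (a.1 x) (b.1 x)) ∨ (l.1 = fun x => min (a.1 x) (b.1 x))} ⊆
        ⋃ a ∈ Cn n s, ⋃ b ∈ Cn n s,
          ({l : Cp X | l.1 = fun x => max (a.1 x) (b.1 x)} ∪
           {l : Cp X | l.1 = fun x => min (a.1 x) (b.1 x)}) := by
      rintro l ⟨a, ha, b, hb, hl⟩
      simp only [Set.mem_iUnion]
      exact ⟨a, ha, b, hb, hl.imp (fun h => h) (fun h => h)⟩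
    apply Set.Countable.mono h1
    exact ih.biUnion fun a _ => ih.biUnion fun b _ =>
      ((val_fiber_subsingleton _).countable).union ((val_fiber_subsingleton _).countable)

lemma algSet_countable {s : Set (Cp X)} (hs : s.Countable) : (algSet s).Countable :=
  Set.countable_iUnion (Cn_countable hs)

lemma Lset_iUnion (s : ℕ → Set (Cp X)) : Lset (⋃ k, s k) = ⋃ k, Lset (s k) := by
  apply Set.Subset.antisymm
  · rintro l (⟨q₁, q₂, f, hf, hl⟩ | hc)
    · obtain ⟨k, hk⟩ := Set.mem_iUnion.mp hf
      exact Set.mem_iUnion.mpr ⟨k, Or.inl ⟨q₁, q₂, f, hk, hl⟩⟩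
    · exact Set.mem_iUnion.mpr ⟨0, Or.inr hc⟩
  · exact Set.iUnion_subset fun k => Lset_mono (Set.subset_iUnion s k)

lemma Cn_iUnion (s : ℕ → Set (Cp X)) (hs : Monotone s) (n : ℕ) :
    Cn n (⋃ k, s k) = ⋃ k, Cn n (s k) := by
  induction n with
  | zero => exact Lset_iUnion s
  | succ n ih =>
    apply Set.Subset.antisymm
    · rintro l (hl | ⟨a, ha, b, hb, hl⟩)
      · rw [ih] at hl
        obtain ⟨k, hk⟩ := Set.mem_iUnion.mp hl
        exact Set.mem_iUnion.mpr ⟨k, Or.inl hk⟩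
      · rw [ih] at ha hb
        obtain ⟨i, hi⟩ := Set.mem_iUnion.mp ha
        obtain ⟨j, hj⟩ := Set.mem_iUnion.mp hb
        refine Set.mem_iUnion.mpr ⟨max i j, Or.inr ⟨a, ?_, b, ?_, hl⟩⟩
        · exact Cn_mono n (hs (le_max_left i j)) hi
        · exact Cn_mono n (hs (le_max_right i j)) hj
    · exact Set.iUnion_subset fun k => Cn_mono (n+1) (Set.subset_iUnion s k)

lemma algSet_iUnion (s : ℕ → Set (Cp X)) (hs : Monotone s) :
    algSet (⋃ k, s k) = ⋃ k, algSet (s k) := by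
  unfold algSet
  rw [Set.iUnion_comm]
  exact Set.iUnion_congr fun n => Cn_iUnion s hs n

lemma algSet_coincide {s : Set (Cp X)} {x y : X}
    (hL : ∀ l ∈ Lset s, l.1 x = l.1 y) : ∀ l ∈ algSet s, l.1 x = l.1 y := by
  intro l hl
  obtain ⟨n, hn⟩ := Set.mem_iUnion.mp hl
  clear hl
  induction n generalizing l with
  | zero => exact hL l hn
  | succ n ih =>
    rcases hn with hn | ⟨a, ha, b, hb, hn⟩
    · exact ih l hn
    · rcases hn with hn | hn <;>
      · have hx := congrFun hn x
        have hy := congrFun hn y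
        rw [hx, hy, ih a ha, ih b hb]


/-- `Lset` is closed under rational affine images. -/
lemma Lset_affine {s : Set (Cp X)} {l : Cp X} (hl : l ∈ Lset s) (hne : ∃ x y, l.1 x ≠ l.1 y)
    (α β : ℚ) (m : Cp X) (hm : m.1 = fun x => (α : ℝ) + (β : ℝ) * l.1 x) : m ∈ Lset s := by
  rcases hl with ⟨q₁, q₂, f, hf, hl⟩ | ⟨q, hl⟩
  · refine Or.inl ⟨α + β * q₁, β * q₂, f, hf, ?_⟩
    rw [hm, hl]
    funext x
    push_cast
    ring
  · exfalso
    obtain ⟨x, y, hxy⟩ := hne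
    rw [hl] at hxy
    exact hxy rfl

/-- Two-point approximation. -/
lemma approx2 {s : Set (Cp X)} {h : X → ℝ}
    (hres : ∀ x y : X, (∀ l ∈ Lset s, l.1 x = l.1 y) → h x = h y)
    (x y : X) {ε : ℝ} (hε : 0 < ε) :
    ∃ a ∈ algSet s, |a.1 x - h x| < ε ∧ |a.1 y - h y| < ε := by
  by_cases hxy : ∀ l ∈ Lset s, l.1 x = l.1 y
  · have hh : h x = h y := hres x y hxy
    obtain ⟨q, hq1, hq2⟩ := exists_rat_btwn (show h x - ε < h x by linarith)
    refine ⟨⟨fun _ => (q : ℝ), continuous_const⟩,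
      Lset_subset_algSet (const_mem_Lset s q _ rfl), ?_, ?_⟩
    · simp only [abs_sub_lt_iff]; constructor <;> linarith
    · simp only [abs_sub_lt_iff]; rw [← hh]; constructor <;> linarith
  · push_neg at hxy
    obtain ⟨l, hl, hlxy⟩ := hxy
    set u := l.1 x with hu
    set v := l.1 y with hv
    have huv : u - v ≠ 0 := sub_ne_zero.mpr hlxy
    set β₀ : ℝ := (h x - h y) / (u - v) with hβ₀
    set α₀ : ℝ := h x - β₀ * u with hα₀
    have keyx : α₀ + β₀ * u = h x := by ring
    have keyy : α₀ + β₀ * v = h y := by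
      have : β₀ * (u - v) = h x - h y := div_mul_cancel₀ _ huv
      rw [hα₀]; nlinarith [this]
    set c : ℝ := 1 + |u| + |v| with hc
    have hcpos : (0 : ℝ) < c := by positivity
    set δ : ℝ := ε / (2 * c) with hδ
    have hδpos : 0 < δ := by positivity
    obtain ⟨β, hβ1, hβ2⟩ := exists_rat_btwn (show β₀ - δ < β₀ by linarith)
    obtain ⟨α, hα1, hα2⟩ := exists_rat_btwn (show α₀ - ε/2 < α₀ by linarith)
    have habsβ : |(β : ℝ) - β₀| < δ := by rw [abs_sub_lt_iff]; constructor <;> linarith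
    have habsα : |(α : ℝ) - α₀| < ε/2 := by rw [abs_sub_lt_iff]; constructor <;> linarith
    have hδc : δ * c = ε / 2 := by
      rw [hδ]; field_simp
    refine ⟨⟨fun w => (α : ℝ) + (β : ℝ) * l.1 w,
      continuous_const.add (continuous_const.mul l.2)⟩,
      Lset_subset_algSet (Lset_affine hl ⟨x, y, hlxy⟩ α β _ rfl), ?_, ?_⟩
    · show |((α : ℝ) + (β : ℝ) * u) - h x| < ε
      have heq : ((α : ℝ) + (β : ℝ) * u) - h x = ((α : ℝ) - α₀) + ((β : ℝ) - β₀) * u := by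
        rw [← keyx]; ring
      rw [heq]
      calc |((α : ℝ) - α₀) + ((β : ℝ) - β₀) * u| ≤ |(α : ℝ) - α₀| + |((β : ℝ) - β₀) * u| :=
            abs_add_le _ _
        _ < ε/2 + δ * c := by
            apply add_lt_add habsα
            rw [abs_mul]
            calc |(β : ℝ) - β₀| * |u| ≤ |(β : ℝ) - β₀| * c := by
                  apply mul_le_mul_of_nonneg_left _ (abs_nonneg _)
                  rw [hc]; have := abs_nonneg v; linarith
              _ < δ * c := by exact mul_lt_mul_of_pos_right habsβ hcpos
        _ = ε := by rw [hδc]; ring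
    · show |((α : ℝ) + (β : ℝ) * v) - h y| < ε
      have heq : ((α : ℝ) + (β : ℝ) * v) - h y = ((α : ℝ) - α₀) + ((β : ℝ) - β₀) * v := by
        rw [← keyy]; ring
      rw [heq]
      calc |((α : ℝ) - α₀) + ((β : ℝ) - β₀) * v| ≤ |(α : ℝ) - α₀| + |((β : ℝ) - β₀) * v| :=
            abs_add_le _ _
        _ < ε/2 + δ * c := by
            apply add_lt_add habsα
            rw [abs_mul]
            calc |(β : ℝ) - β₀| * |v| ≤ |(β : ℝ) - β₀| * c := by
                  apply mul_le_mul_of_nonneg_left _ (abs_nonneg _)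
                  rw [hc]; have := abs_nonneg u; linarith
              _ < δ * c := by exact mul_lt_mul_of_pos_right habsβ hcpos
        _ = ε := by rw [hδc]; ring

/-- `algSet` contains pointwise `inf'` of finite families. -/
lemma exists_inf' {s : Set (Cp X)} (T : Finset X) (hT : T.Nonempty) (c : X → Cp X)
    (hc : ∀ i ∈ T, c i ∈ algSet s) :
    ∃ b ∈ algSet s, ∀ w, b.1 w = T.inf' hT fun i => (c i).1 w := by
  revert hc
  induction hT using Finset.Nonempty.cons_induction with
  | singleton a => exact fun hc => ⟨c a, hc a (by simp), fun w => by simp⟩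
  | cons a T ha hT ih =>
    intro hc
    obtain ⟨b, hbm, hbv⟩ := ih (fun i hi => hc i (Finset.mem_cons_of_mem hi))
    refine ⟨⟨fun w => min ((c a).1 w) (b.1 w), ((c a).2.min b.2)⟩,
      max_mem_algSet (hc a (Finset.mem_cons_self a T)) hbm _ (Or.inr rfl), fun w => ?_⟩
    rw [Finset.inf'_cons]
    show min ((c a).1 w) (b.1 w) = _
    rw [hbv w]

lemma exists_sup' {s : Set (Cp X)} (T : Finset X) (hT : T.Nonempty) (c : X → Cp X)
    (hc : ∀ i ∈ T, c i ∈ algSet s) :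
    ∃ b ∈ algSet s, ∀ w, b.1 w = T.sup' hT fun i => (c i).1 w := by
  revert hc
  induction hT using Finset.Nonempty.cons_induction with
  | singleton a => exact fun hc => ⟨c a, hc a (by simp), fun w => by simp⟩
  | cons a T ha hT ih =>
    intro hc
    obtain ⟨b, hbm, hbv⟩ := ih (fun i hi => hc i (Finset.mem_cons_of_mem hi))
    refine ⟨⟨fun w => max ((c a).1 w) (b.1 w), ((c a).2.max b.2)⟩,
      max_mem_algSet (hc a (Finset.mem_cons_self a T)) hbm _ (Or.inl rfl), fun w => ?_⟩
    rw [Finset.sup'_cons]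
    show max ((c a).1 w) (b.1 w) = _
    rw [hbv w]

/-- Finite approximation: lattice Stone–Weierstrass. -/
lemma algSet_approx {s : Set (Cp X)} {h : X → ℝ}
    (hres : ∀ x y : X, (∀ l ∈ Lset s, l.1 x = l.1 y) → h x = h y)
    (F : Finset X) {ε : ℝ} (hε : 0 < ε) :
    ∃ a ∈ algSet s, ∀ x ∈ F, |a.1 x - h x| < ε := by
  classical
  rcases F.eq_empty_or_nonempty with rfl | hF
  · exact ⟨⟨fun _ => ((0:ℚ) : ℝ), continuous_const⟩,
      Lset_subset_algSet (const_mem_Lset s 0 _ rfl), by simp⟩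
  have H2 : ∀ x y : X, ∃ a, a ∈ algSet s ∧ |a.1 x - h x| < ε ∧ |a.1 y - h y| < ε := by
    intro x y
    obtain ⟨a, ham, h1, h2⟩ := approx2 hres x y hε
    exact ⟨a, ham, h1, h2⟩
  choose a2 ha2m ha2x ha2y using H2
  have Hb : ∀ x : X, ∃ b, b ∈ algSet s ∧ (∀ z ∈ F, b.1 z < h z + ε) ∧ (h x - ε < b.1 x) := by
    intro x
    obtain ⟨b, hbm, hbv⟩ := exists_inf' F hF (a2 x) (fun y _ => ha2m x y)
    refine ⟨b, hbm, fun z hz => ?_, ?_⟩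
    · have h1 : b.1 z ≤ (a2 x z).1 z := by
        rw [hbv z]; exact Finset.inf'_le _ hz
      have h2 := abs_sub_lt_iff.mp (ha2y x z)
      linarith [h2.1, h2.2]
    · rw [hbv x, Finset.lt_inf'_iff]
      intro y hy
      have h2 := abs_sub_lt_iff.mp (ha2x x y)
      linarith [h2.1, h2.2]
  choose b hbm hbup hblow using Hb
  obtain ⟨g, hgm, hgv⟩ := exists_sup' F hF b (fun x _ => hbm x)
  refine ⟨g, hgm, fun z hz => ?_⟩
  rw [abs_sub_lt_iff]
  constructor
  · have : F.sup' hF (fun x => (b x).1 z) < h z + ε := by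
      rw [Finset.sup'_lt_iff]
      intro x _
      exact hbup x z hz
    rw [hgv z]; linarith
  · have h1 : (b z).1 z ≤ F.sup' hF (fun x => (b x).1 z) := Finset.le_sup' (fun x => (b x).1 z) hz
    have h2 := hblow z
    rw [hgv z]; linarith

/-- Key: any function respecting the coincidence relation of `Lset s` lies in the
pointwise closure of `algSet s`. -/
lemma mem_closure_algSet {s : Set (Cp X)} (h : Cp X)
    (hres : ∀ x y : X, (∀ l ∈ Lset s, l.1 x = l.1 y) → h.1 x = h.1 y) :
    h ∈ closure (algSet s) := by
  rw [mem_closure_iff]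
  intro o ho hho
  obtain ⟨O, hO, rfl⟩ := isOpen_induced_iff.mp ho
  have hhO : h.1 ∈ O := hho
  obtain ⟨I, u, hu, hsub⟩ := isOpen_pi_iff.mp hO h.1 hhO
  have hrad : ∀ i, i ∈ I → ∃ δ : ℝ, 0 < δ ∧ Metric.ball (h.1 i) δ ⊆ u i := by
    intro i hi
    exact Metric.isOpen_iff.mp (hu i hi).1 _ (hu i hi).2
  choose! δ hδpos hδsub using hrad
  rcases I.eq_empty_or_nonempty with rfl | hI
  · refine ⟨⟨fun _ => ((0:ℚ) : ℝ), continuous_const⟩, ?_,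
      Lset_subset_algSet (const_mem_Lset s 0 _ rfl)⟩
    apply hsub
    simp
  · set ε := I.inf' hI δ with hε'
    have hε : 0 < ε := by
      rw [hε', Finset.lt_inf'_iff]
      exact fun i hi => hδpos i hi
    obtain ⟨a, ham, hab⟩ := algSet_approx hres I hε
    refine ⟨a, ?_, ham⟩
    apply hsub
    rw [Set.mem_pi]
    intro i hi
    apply hδsub i hi
    rw [Metric.mem_ball, Real.dist_eq]
    exact lt_of_lt_of_le (hab i hi) (Finset.inf'_le _ hi)


/-- The countable ℚ-affine-lattice hull, as a `CtbSet`. -/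
def PhiS (s : CtbSet (Cp X)) : CtbSet (Cp X) := ⟨algSet s.1, algSet_countable s.2⟩

/-- The diagonal map of the pointwise closure of the hull. -/
def qDiag (s : CtbSet (Cp X)) : X → (↥(closure (PhiS s).1) → ℝ) := cpDiag (closure (PhiS s).1)

open Classical in
noncomputable def pickSet (M : Set X) : Set X := if h : M.Nonempty then {h.some} else ∅

lemma pickSet_countable (M : Set X) : (pickSet M).Countable := by
  unfold pickSet
  split
  exacts [Set.countable_singleton _, Set.countable_empty]

lemma pickSet_mem {M : Set X} (hM : M.Nonempty) : hM.some ∈ pickSet M := by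
  unfold pickSet
  rw [dif_pos hM]
  exact rfl

lemma le_iff {a b : CtbSet (Cp X)} : a ≤ b ↔ a.1 ⊆ b.1 := by
  rw [← Subtype.coe_le_coe]

lemma qDiag_eq_of_coincide {s : CtbSet (Cp X)} {x y : X}
    (hL : ∀ l ∈ Lset s.1, l.1 x = l.1 y) : qDiag s x = qDiag s y := by
  funext f
  have hcl : closure (PhiS s).1 ⊆ {l : Cp X | l.1 x = l.1 y} :=
    closure_minimal (fun l hl => algSet_coincide hL l hl)
      (isClosed_eq ((continuous_apply x).comp continuous_subtype_val)
        ((continuous_apply y).comp continuous_subtype_val))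
  exact hcl f.2

noncomputable def skel (N : CtbSet (Cp X) → CtbSet (Set X)) (hNm : OmegaMonotone N)
    (hNnet : ∀ A : CtbSet (Cp X), IsNetworkOfMap (N A).1 (cpDiag (closure A.1))) :
    QSkeleton X (CtbSet (Cp X)) where
  Xs s := ↥(Set.range (qDiag s))
  top _ := inferInstance
  q s := Set.rangeFactorization (qDiag s)
  D s := ⋃ M ∈ (N (PhiS s)).1, pickSet M
  directed s t := ⟨⟨s.1 ∪ t.1, s.2.union t.2⟩,
    le_iff.mpr Set.subset_union_left, le_iff.mpr Set.subset_union_right⟩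
  sigma c hc := by
    refine ⟨⟨⋃ n, (c n).1, Set.countable_iUnion fun n => (c n).2⟩, ?_, ?_⟩
    · rintro _ ⟨n, rfl⟩
      exact le_iff.mpr (Set.subset_iUnion (fun k => (c k).1) n)
    · intro b hb
      apply le_iff.mpr
      apply Set.iUnion_subset
      intro n
      exact le_iff.mp (hb (Set.mem_range_self n))
  rquot s := by
    refine ⟨(continuous_pi fun f => f.1.2).subtype_mk _, Set.rangeFactorization_surjective, ?_⟩
    intro g hg
    have hcont : Continuous (fun x => g (Set.rangeFactorization (qDiag s) x)) := hg
    have hmem : (⟨_, hcont⟩ : Cp X) ∈ closure (algSet s.1) := by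
      apply mem_closure_algSet
      intro x y hL
      show g _ = g _
      congr 1
      exact Subtype.ext (qDiag_eq_of_coincide hL)
    have hgeq : g = fun z => z.1 ⟨⟨_, hcont⟩, hmem⟩ := by
      funext z
      obtain ⟨x, hx⟩ := z.2
      have hz : Set.rangeFactorization (qDiag s) x = z := Subtype.ext hx
      rw [← hz]
      rfl
    rw [hgeq]
    exact (continuous_apply _).comp continuous_subtype_val
  D_ctble s := (N (PhiS s)).2.biUnion fun M _ => pickSet_countable M
  dense s := by
    intro z
    rw [mem_closure_iff]
    intro o ho hz
    obtain ⟨O, hO, rfl⟩ := isOpen_induced_iff.mp ho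
    obtain ⟨x, hx⟩ := z.2
    have hxO : qDiag s x ∈ O := by rw [hx]; exact hz
    obtain ⟨M, hM, hxM, hMO⟩ := hNnet (PhiS s) x O hO hxO
    have hMne : M.Nonempty := ⟨x, hxM⟩
    refine ⟨Set.rangeFactorization (qDiag s) hMne.some,
      hMO ⟨hMne.some, hMne.some_mem, rfl⟩,
      Set.mem_image_of_mem _ (Set.mem_biUnion hM (pickSet_mem hMne))⟩
  proj s t hst := by
    have hsub : closure (PhiS s).1 ⊆ closure (PhiS t).1 :=
      closure_mono (algSet_mono (le_iff.mp hst))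
    refine ⟨fun z => ⟨fun f => z.1 ⟨f.1, hsub f.2⟩, ?_⟩, ?_, ?_, ?_⟩
    · obtain ⟨x, hx⟩ := z.2
      refine ⟨x, ?_⟩
      funext f
      rw [← hx]
      rfl
    · apply Continuous.subtype_mk
      apply continuous_pi
      intro f
      exact (continuous_apply (⟨f.1, hsub f.2⟩ : ↥(closure (PhiS t).1))).comp
        continuous_subtype_val
    · intro y
      obtain ⟨x, hx⟩ := y.2
      refine ⟨Set.rangeFactorization (qDiag t) x, Subtype.ext ?_⟩
      funext f
      rw [← hx]
      rfl
    · intro x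
      exact Subtype.ext rfl
  Dmono := by
    constructor
    · intro a b hab
      exact Set.biUnion_subset_biUnion_left (hNm.1 _ _ (algSet_mono (le_iff.mp hab)))
    · intro c t hc hlub
      have hub : (⟨⋃ n, (c n).1, Set.countable_iUnion fun n => (c n).2⟩ : CtbSet (Cp X)) ∈
          upperBounds (Set.range c) := by
        rintro _ ⟨n, rfl⟩
        exact le_iff.mpr (Set.subset_iUnion (fun k => (c k).1) n)
      have ht1 : t.1 = ⋃ n, (c n).1 := by
        apply Set.Subset.antisymm
        · exact le_iff.mp (hlub.2 hub)
        · exact Set.iUnion_subset fun n => le_iff.mp (hlub.1 (Set.mem_range_self n))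
      have hPhi : (PhiS t).1 = ⋃ n, (PhiS (c n)).1 := by
        show algSet t.1 = _
        rw [ht1]
        exact algSet_iUnion _ (fun i j hij => le_iff.mp (hc hij))
      have hNch : (N (PhiS t)).1 = ⋃ n, (N (PhiS (c n))).1 :=
        hNm.2 (fun n => PhiS (c n)) (PhiS t)
          (fun n => algSet_mono (le_iff.mp (hc (Nat.le_succ n)))) hPhi
      simp only [hNch, Set.biUnion_iUnion]


end QSkelAux

theorem hasFullQSkeleton_of_monotonicallyOmegaStable (X : Type u) [TopologicalSpace X]
    [T35Space X] (h : MonotonicallyOmegaStable X) : HasFullQSkeleton X := by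
  obtain ⟨N, hNm, hNnet⟩ := h
  refine ⟨CtbSet (Cp X), inferInstance, QSkelAux.skel N hNm hNnet, ?_⟩
  intro f hf
  set s : CtbSet (Cp X) := ⟨{⟨f, hf⟩}, Set.countable_singleton _⟩ with hs
  have hfmem : (⟨f, hf⟩ : Cp X) ∈ closure (QSkelAux.PhiS s).1 := by
    apply subset_closure
    apply QSkelAux.Lset_subset_algSet
    refine Or.inl ⟨0, 1, ⟨f, hf⟩, Set.mem_singleton _, ?_⟩
    funext x
    push_cast
    ring
  refine ⟨s, (fun z : ↥(Set.range (QSkelAux.qDiag s)) => z.1 ⟨⟨f, hf⟩, hfmem⟩), ?_, ?_⟩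
  · show Continuous fun z : ↥(Set.range (QSkelAux.qDiag s)) => z.1 ⟨⟨f, hf⟩, hfmem⟩
    exact (continuous_apply _).comp continuous_subtype_val
  · funext x
    rfl
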